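/- arXiv:1107.3174 — 2 statements merged into one kernel-verified Lean document; each statement's English description precedes it below -/
import Mathlib

section
/- (Heisenberg Uncertainty Principle for linear Gaussian quantum systems, system-theoretic form.) Let J denote the 2×2 real matrix [[0,1],[-1,0]], and let Θ = diag_n(J) be the 2n×2n block-diagonal matrix with J repeated n times. Let A be a real 2n×2n Hurwitz matrix, B a real 2n×2m matrix, S_w a real symmetric 2m×2m matrix, and T_w a Hermitian 2m×2m complex matrix such that F_w = S_w + T_w is positive semidefinite. Suppose the real symmetric 2n×2n matrix P satisfies A·P + P·Aᵀ + B·S_w·Bᵀ = 0, and suppose A·Θ + Θ·Aᵀ − i·B·T_w·Bᵀ = 0. Then the complex matrix P + iΘ is positive semidefinite. -/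
open Matrix
open scoped ComplexOrder

/-- A complex square matrix is Hurwitz if every eigenvalue (i.e. every element of its
spectrum) has strictly negative real part. -/
def Matrix.IsHurwitz {k : Type*} [Fintype k] [DecidableEq k] (A : Matrix k k ℂ) : Prop :=
  ∀ μ ∈ spectrum ℂ A, μ.re < 0

/-- The complexification of a real matrix. -/
def Matrix.cplx {k l : Type*} (A : Matrix k l ℝ) : Matrix k l ℂ :=
  A.map Complex.ofReal

/-- The 2×2 symplectic matrix `J = [[0,1],[-1,0]]`. -/
def Jmat : Matrix (Fin 2) (Fin 2) ℝ := !![0, 1; -1, 0]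


open Filter NormedSpace

attribute [local instance] Matrix.linftyOpNormedRing Matrix.linftyOpNormedAlgebra
  Matrix.linftyOpNormedAddCommGroup

set_option maxHeartbeats 2000000

lemma coeff_tendsto {μ : ℂ} (hμ : μ.re < 0) (j : ℕ) :
    Tendsto (fun t : ℝ => Complex.exp (t * μ) * ((t : ℂ) ^ j * ((j.factorial : ℂ))⁻¹))
      atTop (nhds 0) := by
  rw [tendsto_zero_iff_norm_tendsto_zero]
  have hb : (0:ℝ) < -μ.re := by linarith
  have key : Tendsto (fun t : ℝ => ((-μ.re) * t) ^ j * Real.exp (-((-μ.re) * t))) atTop (nhds 0) :=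
    (Real.tendsto_pow_mul_exp_neg_atTop_nhds_zero j).comp
      (Filter.Tendsto.const_mul_atTop hb tendsto_id)
  have key2 : Tendsto (fun t : ℝ =>
      ((j.factorial : ℝ))⁻¹ * ((-μ.re)⁻¹) ^ j * (((-μ.re) * t) ^ j * Real.exp (-((-μ.re) * t))))
      atTop (nhds 0) := by
    simpa using key.const_mul (((j.factorial : ℝ))⁻¹ * ((-μ.re)⁻¹) ^ j)
  apply key2.congr'
  filter_upwards [eventually_ge_atTop (0:ℝ)] with t ht
  have h1 : ‖Complex.exp (t * μ)‖ = Real.exp (t * μ.re) := by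
    rw [Complex.norm_exp]
    norm_num
  rw [norm_mul, h1, norm_mul, norm_pow, norm_inv, Complex.norm_natCast, Complex.norm_real,
    Real.norm_of_nonneg ht]
  have : -((-μ.re) * t) = t * μ.re := by ring
  rw [this, mul_pow]
  have hne : μ.re ≠ 0 := ne_of_lt hμ
  field_simp
  rw [← mul_pow, neg_mul_neg, one_div, inv_mul_cancel₀ hne, one_pow, one_mul]

lemma exp_mulVec_eq {k : Type*} [Fintype k] [DecidableEq k]
    {μ : ℂ} (N : Matrix k k ℂ) {v : k → ℂ} {d : ℕ}
    (hv : N ^ d *ᵥ v = 0) (t : ℝ) :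
    exp (t • (μ • (1 : Matrix k k ℂ) + N)) *ᵥ v
      = ∑ j ∈ Finset.range d, (Complex.exp (t * μ) * ((t:ℂ) ^ j * ((j.factorial : ℂ))⁻¹)) •
          (N ^ j *ᵥ v) := by
  have hsplit : t • (μ • (1 : Matrix k k ℂ) + N) = ((t : ℂ) * μ) • (1 : Matrix k k ℂ) + t • N := by
    rw [smul_add, ← smul_assoc, Complex.real_smul]
  have hcomm : Commute (((t : ℂ) * μ) • (1 : Matrix k k ℂ)) (t • N) :=
    Commute.smul_left (Commute.smul_right (Commute.one_left N) t) _
  rw [hsplit, Matrix.exp_add_of_commute _ _ hcomm]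
  have hone : exp (((t : ℂ) * μ) • (1 : Matrix k k ℂ)) = Complex.exp (t * μ) • 1 := by
    rw [← Algebra.algebraMap_eq_smul_one]
    have h := (algebraMap_exp_comm (𝔸 := Matrix k k ℂ) ((t : ℂ) * μ)).symm
    rw [Complex.exp_eq_exp_ℂ, ← Algebra.algebraMap_eq_smul_one]
    exact h
  set L : Matrix k k ℂ →ₗ[ℂ] (k → ℂ) :=
    { toFun := fun M => M *ᵥ v
      map_add' := fun M₁ M₂ => Matrix.add_mulVec _ _ _
      map_smul' := fun c M => Matrix.smul_mulVec c M v } with hLdef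
  have hexp : exp (t • N) *ᵥ v = ∑' j : ℕ, ((j.factorial : ℂ))⁻¹ • ((t • N) ^ j *ᵥ v) := by
    have h := (LinearMap.toContinuousLinearMap L).map_tsum
      (expSeries_summable' (𝕂 := ℂ) (t • N))
    simp only [LinearMap.coe_toContinuousLinearMap'] at h
    rw [exp_eq_tsum ℂ]
    have h1 : ∀ M : Matrix k k ℂ, L M = M *ᵥ v := fun _ => rfl
    have h2 : ∀ j : ℕ, L (((j.factorial : ℂ))⁻¹ • (t • N) ^ j)
        = ((j.factorial : ℂ))⁻¹ • ((t • N) ^ j *ᵥ v) := by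
      intro j; rw [L.map_smul, h1]
    rw [← h1, h]
    exact tsum_congr h2
  have hterm : ∀ j : ℕ, ((j.factorial : ℂ))⁻¹ • ((t • N) ^ j *ᵥ v)
      = ((t:ℂ) ^ j * ((j.factorial : ℂ))⁻¹) • (N ^ j *ᵥ v) := by
    intro j
    rw [smul_pow, Matrix.smul_mulVec, smul_comm, ← smul_assoc]
    congr 1
    rw [Complex.real_smul]
    push_cast
    ring
  have hzero : ∀ j : ℕ, d ≤ j → ((t:ℂ) ^ j * ((j.factorial : ℂ))⁻¹) • (N ^ j *ᵥ v) = 0 := by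
    intro j hj
    have : N ^ j *ᵥ v = 0 := by
      rw [← Nat.sub_add_cancel hj, pow_add, ← Matrix.mulVec_mulVec, hv, Matrix.mulVec_zero]
    rw [this, smul_zero]
  have hsum : exp (t • N) *ᵥ v
      = ∑ j ∈ Finset.range d, ((t:ℂ) ^ j * ((j.factorial : ℂ))⁻¹) • (N ^ j *ᵥ v) := by
    rw [hexp]
    rw [tsum_congr hterm]
    exact tsum_eq_sum (fun j hj => hzero j (by simpa using hj))
  rw [hone, smul_mul_assoc, one_mul, Matrix.smul_mulVec, hsum, Finset.smul_sum]
  refine Finset.sum_congr rfl fun j _ => ?_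
  rw [← smul_assoc, smul_eq_mul]

lemma hurwitz_decay {k : Type*} [Fintype k] [DecidableEq k] {A : Matrix k k ℂ}
    (hA : ∀ μ ∈ spectrum ℂ A, μ.re < 0) (v : k → ℂ) :
    Tendsto (fun t : ℝ => exp (t • A) *ᵥ v) atTop (nhds 0) := by
  have htop : v ∈ (⨆ μ : ℂ, Module.End.maxGenEigenspace (Matrix.toLinAlgEquiv' A) μ) := by
    rw [Module.End.iSup_maxGenEigenspace_eq_top]; trivial
  refine Submodule.iSup_induction (motive := fun w => Tendsto (fun t : ℝ => exp (t • A) *ᵥ w) atTop (nhds 0)) _ htop ?_ ?_ ?_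
  · intro μ x hx
    by_cases hx0 : x = 0
    · simpa [hx0] using (tendsto_const_nhds :
        Tendsto (fun _ : ℝ => (0 : k → ℂ)) atTop (nhds 0))
    have hμ : μ.re < 0 := by
      have hne : Module.End.maxGenEigenspace (Matrix.toLinAlgEquiv' A) μ ≠ ⊥ :=
        Submodule.ne_bot_iff _ |>.mpr ⟨x, hx, hx0⟩
      have hev : Module.End.HasEigenvalue (Matrix.toLinAlgEquiv' A) μ :=
        Module.End.HasUnifEigenvalue.lt zero_lt_one hne
      have hspec : μ ∈ spectrum ℂ A := by
        rw [← AlgEquiv.spectrum_eq (Matrix.toLinAlgEquiv' (R := ℂ) (n := k)) A]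
        exact Module.End.hasEigenvalue_iff_mem_spectrum.mp hev
      exact hA μ hspec
    obtain ⟨d, hd⟩ := (Module.End.mem_maxGenEigenspace _ _ _).mp hx
    have hdm : (A - μ • 1) ^ d *ᵥ x = 0 := by
      have h1 : (Matrix.toLinAlgEquiv' A) - μ • 1
          = Matrix.toLinAlgEquiv' (A - μ • (1 : Matrix k k ℂ)) := by
        rw [map_sub, _root_.map_smul, _root_.map_one]
      rw [h1, ← map_pow, Matrix.toLinAlgEquiv'_apply] at hd
      exact hd
    have hAeq : A = μ • 1 + (A - μ • 1) := by abel
    have hfun : ∀ t : ℝ, exp (t • A) *ᵥ x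
        = ∑ j ∈ Finset.range d,
            (Complex.exp (t * μ) * ((t:ℂ) ^ j * ((j.factorial : ℂ))⁻¹)) •
              ((A - μ • 1) ^ j *ᵥ x) := by
      intro t
      conv_lhs => rw [hAeq]
      exact exp_mulVec_eq _ hdm t
    simp only [hfun]
    have : Tendsto (fun t : ℝ => ∑ j ∈ Finset.range d,
        (Complex.exp (t * μ) * ((t:ℂ) ^ j * ((j.factorial : ℂ))⁻¹)) •
          ((A - μ • 1) ^ j *ᵥ x)) atTop (nhds (∑ j ∈ Finset.range d, (0:k → ℂ))) := by
      refine tendsto_finset_sum _ fun j _ => ?_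
      simpa using (coeff_tendsto hμ j).smul_const ((A - μ • 1) ^ j *ᵥ x)
    simpa using this
  · simpa using (tendsto_const_nhds :
      Tendsto (fun _ : ℝ => (0 : k → ℂ)) atTop (nhds 0))
  · intro x y hxt hyt
    have := hxt.add hyt
    simp only [Matrix.mulVec_add] at *
    simpa using this

lemma lyapunov_psd {k : Type*} [Fintype k] [DecidableEq k] {A M Q : Matrix k k ℂ}
    (hA : ∀ μ ∈ spectrum ℂ A, μ.re < 0) (hM : M.IsHermitian) (hQ : Q.PosSemidef)
    (hLyap : A * M + M * Aᴴ + Q = 0) : M.PosSemidef := by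
  refine Matrix.posSemidef_iff_dotProduct_mulVec.mpr ⟨?_, ?_⟩
  · exact hM
  intro x
  -- spectrum of Aᴴ
  have hAH : ∀ μ ∈ spectrum ℂ Aᴴ, μ.re < 0 := by
    intro μ hμ
    have h1 : star μ ∈ spectrum ℂ A := by
      rw [spectrum.mem_iff] at hμ ⊢
      intro hunit
      apply hμ
      have := hunit.star
      rwa [star_sub, ← algebraMap_star_comm, star_star, Matrix.star_eq_conjTranspose] at this
    have := hA _ h1
    simpa using this
  set X : ℝ → Matrix k k ℂ := fun t => exp (t • A) with hXdef
  have hXd : ∀ t : ℝ, HasDerivAt X (A * X t) t := by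
    intro t
    exact hasDerivAt_exp_smul_const' A t
  have hXH : ∀ t : ℝ, (X t)ᴴ = exp (t • Aᴴ) := by
    intro t
    rw [hXdef, ← Matrix.exp_conjTranspose]
    congr 1
    ext i j
    simp [Matrix.conjTranspose_apply, Matrix.smul_apply, Complex.real_smul]
  set G : ℝ → Matrix k k ℂ := fun t => X t * M * (X t)ᴴ with hGdef
  have hGd : ∀ t : ℝ, HasDerivAt G (-(X t * Q * (X t)ᴴ)) t := by
    intro t
    have hXHd : HasDerivAt (fun s => (X s)ᴴ) ((X t)ᴴ * Aᴴ) t := by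
      haveI : @ContinuousStar (Matrix k k ℂ) PseudoMetricSpace.toUniformSpace.toTopologicalSpace _ :=
        ⟨by exact (continuous_id.matrix_conjTranspose : Continuous fun B : Matrix k k ℂ => Bᴴ)⟩
      have h := (hXd t).star
      simp only [Matrix.star_eq_conjTranspose, Matrix.conjTranspose_mul] at h
      exact h
    have h1 : HasDerivAt (fun s => X s * M) (A * X t * M) t := (hXd t).mul_const M
    have h2 := h1.mul hXHd
    have hcomm : A * X t = X t * A := by
      have : Commute A (t • A) := (Commute.refl A).smul_right t
      exact this.exp_right.eq
    have h3 : A * X t * M * (X t)ᴴ + X t * M * ((X t)ᴴ * Aᴴ) = -(X t * Q * (X t)ᴴ) := by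
      have hAMQ : A * M + M * Aᴴ = -Q := by
        rw [← add_eq_zero_iff_eq_neg]
        calc A * M + M * Aᴴ + Q = A * M + M * Aᴴ + Q := rfl
        _ = 0 := hLyap
      have hcommH : (X t)ᴴ * Aᴴ = Aᴴ * (X t)ᴴ := by
        rw [← Matrix.conjTranspose_mul, hcomm, Matrix.conjTranspose_mul]
      calc A * X t * M * (X t)ᴴ + X t * M * ((X t)ᴴ * Aᴴ)
          = X t * (A * M + M * Aᴴ) * (X t)ᴴ := by rw [hcomm, hcommH]; noncomm_ring
        _ = X t * (-Q) * (X t)ᴴ := by rw [hAMQ]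
        _ = -(X t * Q * (X t)ᴴ) := by noncomm_ring
    rw [← h3]
    exact h2
  -- the continuous linear functional N ↦ star x ⬝ᵥ N *ᵥ x  (over ℝ)
  set ℓ' : Matrix k k ℂ →ₗ[ℝ] ℂ :=
    { toFun := fun N => star x ⬝ᵥ (N *ᵥ x)
      map_add' := fun N₁ N₂ => by simp [Matrix.add_mulVec, dotProduct_add]
      map_smul' := fun c N => by simp [Matrix.smul_mulVec] } with hl'def
  set ℓ : Matrix k k ℂ →L[ℝ] ℂ := LinearMap.toContinuousLinearMap ℓ' with hldef
  have hℓ : ∀ N, ℓ N = star x ⬝ᵥ (N *ᵥ x) := fun N => rfl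
  set g : ℝ → ℝ := fun t => (ℓ (G t)).re with hgdef
  have hgd : ∀ t : ℝ, HasDerivAt g ((ℓ (-(X t * Q * (X t)ᴴ))).re) t := by
    intro t
    exact (Complex.reCLM.hasFDerivAt.comp_hasDerivAt t
      (ℓ.hasFDerivAt.comp_hasDerivAt t (hGd t)))
  have hganti : Antitone g := by
    apply antitone_of_deriv_nonpos
    · exact fun t => ((hgd t).differentiableAt)
    · intro t
      rw [(hgd t).deriv]
      have hpsd : (X t * Q * (X t)ᴴ).PosSemidef := hQ.mul_mul_conjTranspose_same (X t)
      have h0 : 0 ≤ star x ⬝ᵥ ((X t * Q * (X t)ᴴ) *ᵥ x) := hpsd.dotProduct_mulVec_nonneg x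
      rw [hℓ, Matrix.neg_mulVec, dotProduct_neg, Complex.neg_re, neg_nonpos]
      exact ((Complex.le_def.mp h0).1 : (0:ℂ).re ≤ _)
  -- g tends to 0
  have hgsub : ∀ t : ℝ, g t = (star (exp (t • Aᴴ) *ᵥ x) ⬝ᵥ (M *ᵥ (exp (t • Aᴴ) *ᵥ x))).re := by
    intro t
    simp only [hgdef]
    congr 1
    rw [hℓ]
    simp only [hGdef]
    rw [← Matrix.mulVec_mulVec, ← Matrix.mulVec_mulVec, dotProduct_mulVec (star x)]
    congr 1
    · rw [← hXH t]
      rw [Matrix.star_mulVec, Matrix.conjTranspose_conjTranspose]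
    · rw [hXH t]
  have hcont : Continuous (fun y : k → ℂ => star y ⬝ᵥ (M *ᵥ y)) := by
    simp only [dotProduct, Matrix.mulVec, Pi.star_apply]
    fun_prop
  have htend : Tendsto g atTop (nhds 0) := by
    have h1 : Tendsto (fun t : ℝ => exp (t • Aᴴ) *ᵥ x) atTop (nhds 0) := hurwitz_decay hAH x
    have h2 := ((Complex.continuous_re.comp hcont).tendsto 0).comp h1
    have h0 : (Complex.re ∘ fun y : k → ℂ => star y ⬝ᵥ (M *ᵥ y)) 0 = 0 := by simp
    rw [h0] at h2
    refine Tendsto.congr (fun t => ?_) h2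
    rw [hgsub t]
    simp [Function.comp]
  -- conclude 0 ≤ g 0
  have hg0 : 0 ≤ g 0 := by
    refine le_of_tendsto htend ?_
    filter_upwards [eventually_ge_atTop (0:ℝ)] with t ht
    exact hganti ht
  -- realness
  have hreal : star (star x ⬝ᵥ (M *ᵥ x)) = star x ⬝ᵥ (M *ᵥ x) := by
    calc star (star x ⬝ᵥ (M *ᵥ x)) = star (M *ᵥ x) ⬝ᵥ star (star x) := by
          rw [← star_dotProduct_star, star_star]
      _ = (star x ᵥ* Mᴴ) ⬝ᵥ x := by rw [Matrix.star_mulVec, star_star]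
      _ = star x ⬝ᵥ (Mᴴ *ᵥ x) := by rw [← dotProduct_mulVec]
      _ = star x ⬝ᵥ (M *ᵥ x) := by rw [hM.eq]
  have hg0eq : g 0 = (star x ⬝ᵥ (M *ᵥ x)).re := by
    have hX0 : X 0 = 1 := by rw [hXdef]; simp only [zero_smul]; exact exp_zero
    have hG0 : G 0 = M := by
      simp only [hGdef]
      rw [hX0, Matrix.conjTranspose_one, mul_one, one_mul]
    simp only [hgdef, hG0, hℓ]
  rw [Complex.le_def]
  constructor
  · rw [hg0eq] at hg0; simpa using hg0
  · have := congrArg Complex.im hreal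
    simp only [Complex.star_def, Complex.conj_im] at this
    simp only [Complex.zero_im]
    linarith

lemma Matrix.cplx_conjTranspose {k l : Type*} (A : Matrix k l ℝ) : (A.cplx)ᴴ = (Aᵀ).cplx := by
  ext i j
  simp [Matrix.cplx, Matrix.conjTranspose_apply, Matrix.map_apply, Complex.conj_ofReal]

lemma Matrix.cplx_transpose {k l : Type*} (A : Matrix k l ℝ) : (A.cplx)ᵀ = (Aᵀ).cplx := by
  ext i j
  simp [Matrix.cplx, Matrix.transpose_apply, Matrix.map_apply]

lemma Matrix.cplx_mul {k l o : Type*} [Fintype l] (A : Matrix k l ℝ) (B : Matrix l o ℝ) :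
    (A * B).cplx = A.cplx * B.cplx := by
  ext i j
  simp [Matrix.cplx, Matrix.mul_apply]

lemma Matrix.cplx_add {k l : Type*} (A B : Matrix k l ℝ) : (A + B).cplx = A.cplx + B.cplx := by
  ext i j; simp [Matrix.cplx]

lemma Matrix.cplx_neg {k l : Type*} (A : Matrix k l ℝ) : (-A).cplx = -(A.cplx) := by
  ext i j; simp [Matrix.cplx]


/-- **Heisenberg uncertainty principle for linear Gaussian quantum systems
(system theoretic form).**  Here a `2n`-dimensional index is modelled by `Fin 2 × Fin n`,
so that `Θ = diag_n(J)` is `blockDiagonal (fun _ => J)`.  If `A` is a real Hurwitz matrix,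
`S_w` is real symmetric, `T_w` is Hermitian with `F_w = S_w + T_w ⪰ 0`, the real symmetric
matrix `P` solves `A P + P Aᵀ + B S_w Bᵀ = 0`, and the commutation condition
`A Θ + Θ Aᵀ - i B T_w Bᵀ = 0` holds, then `P + iΘ ⪰ 0`. -/
theorem heisenberg_uncertainty_principle {n m : ℕ}
    (A : Matrix (Fin 2 × Fin n) (Fin 2 × Fin n) ℝ)
    (B : Matrix (Fin 2 × Fin n) (Fin 2 × Fin m) ℝ)
    (Sw : Matrix (Fin 2 × Fin m) (Fin 2 × Fin m) ℝ)
    (Tw : Matrix (Fin 2 × Fin m) (Fin 2 × Fin m) ℂ)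
    (P : Matrix (Fin 2 × Fin n) (Fin 2 × Fin n) ℝ)
    (Θ : Matrix (Fin 2 × Fin n) (Fin 2 × Fin n) ℝ)
    (hΘ : Θ = blockDiagonal (fun _ : Fin n => Jmat))
    (hA : A.cplx.IsHurwitz)
    (hSw : Sw.IsSymm)
    (hTw : Tw.IsHermitian)
    (hFw : (Sw.cplx + Tw).PosSemidef)
    (hP : P.IsSymm)
    (hLyap : A * P + P * Aᵀ + B * Sw * Bᵀ = 0)
    (hComm : A.cplx * Θ.cplx + Θ.cplx * A.cplxᵀ
        - Complex.I • (B.cplx * Tw * B.cplxᵀ) = 0) :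
    (P.cplx + Complex.I • Θ.cplx).PosSemidef := by
  set M : Matrix (Fin 2 × Fin n) (Fin 2 × Fin n) ℂ := P.cplx + Complex.I • Θ.cplx with hMdef
  have hΘT : Θᵀ = -Θ := by
    rw [hΘ, Matrix.blockDiagonal_transpose]
    have hJ : Jmatᵀ = -Jmat := by
      ext i j
      fin_cases i <;> fin_cases j <;> simp [Jmat]
    rw [hΘ] at *
    simp only [hJ]
    exact Matrix.blockDiagonal_neg _
  -- Hermitian
  have hMH : M.IsHermitian := by
    rw [Matrix.IsHermitian, hMdef, Matrix.conjTranspose_add, Matrix.conjTranspose_smul,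
      Matrix.cplx_conjTranspose, Matrix.cplx_conjTranspose, hP.eq, hΘT, Matrix.cplx_neg]
    simp [Complex.star_def, Complex.conj_I]
  -- Lyapunov equation
  have hBH : (B.cplx)ᴴ = (Bᵀ).cplx := Matrix.cplx_conjTranspose B
  have hAH : (A.cplx)ᴴ = (Aᵀ).cplx := Matrix.cplx_conjTranspose A
  have hLyapC : A.cplx * P.cplx + P.cplx * (Aᵀ).cplx + B.cplx * Sw.cplx * (Bᵀ).cplx = 0 := by
    have := congrArg Matrix.cplx hLyap
    have h0 : (0 : Matrix (Fin 2 × Fin n) (Fin 2 × Fin n) ℝ).cplx = 0 := by ext; simp [Matrix.cplx]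
    simpa [Matrix.cplx_add, Matrix.cplx_mul, h0] using this
  have hCommC : A.cplx * (Complex.I • Θ.cplx) + (Complex.I • Θ.cplx) * (Aᵀ).cplx
      + B.cplx * Tw * (Bᵀ).cplx = 0 := by
    have h1 : A.cplx * Θ.cplx + Θ.cplx * (Aᵀ).cplx
        = Complex.I • (B.cplx * Tw * (Bᵀ).cplx) := by
      rw [← Matrix.cplx_transpose A, ← Matrix.cplx_transpose B]
      rw [sub_eq_zero] at hComm
      exact hComm
    calc A.cplx * (Complex.I • Θ.cplx) + (Complex.I • Θ.cplx) * (Aᵀ).cplx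
          + B.cplx * Tw * (Bᵀ).cplx
        = Complex.I • (A.cplx * Θ.cplx + Θ.cplx * (Aᵀ).cplx) + B.cplx * Tw * (Bᵀ).cplx := by
          rw [Matrix.mul_smul, Matrix.smul_mul, smul_add]
      _ = Complex.I • (Complex.I • (B.cplx * Tw * (Bᵀ).cplx)) + B.cplx * Tw * (Bᵀ).cplx := by
          rw [h1]
      _ = 0 := by
          rw [smul_smul, Complex.I_mul_I]
          module
  have hQpsd : (B.cplx * (Sw.cplx + Tw) * (B.cplx)ᴴ).PosSemidef :=
    hFw.mul_mul_conjTranspose_same B.cplx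
  have hLyapM : A.cplx * M + M * (A.cplx)ᴴ + B.cplx * (Sw.cplx + Tw) * (B.cplx)ᴴ = 0 := by
    rw [hAH, hBH, hMdef]
    have hdist : B.cplx * (Sw.cplx + Tw) * (Bᵀ).cplx
        = B.cplx * Sw.cplx * (Bᵀ).cplx + B.cplx * Tw * (Bᵀ).cplx := by
      rw [Matrix.mul_add, Matrix.add_mul]
    calc A.cplx * (P.cplx + Complex.I • Θ.cplx) + (P.cplx + Complex.I • Θ.cplx) * (Aᵀ).cplx
          + B.cplx * (Sw.cplx + Tw) * (Bᵀ).cplx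
        = (A.cplx * P.cplx + P.cplx * (Aᵀ).cplx + B.cplx * Sw.cplx * (Bᵀ).cplx)
          + (A.cplx * (Complex.I • Θ.cplx) + (Complex.I • Θ.cplx) * (Aᵀ).cplx
            + B.cplx * Tw * (Bᵀ).cplx) := by rw [hdist]; noncomm_ring
      _ = 0 := by rw [hLyapC, hCommC, add_zero]
  exact lyapunov_psd hA hMH hQpsd hLyapM
end

section
/- (Convergence of the covariance to the steady state.) Let A be an n×n complex Hurwitz matrix and Q an n×n complex matrix, and let P∞ be the unique n×n matrix satisfying A·P∞ + P∞·Aᴴ + Q = 0. If P : ℝ → ℂ^{n×n} is differentiable and satisfies P′(t) = A·P(t) + P(t)·Aᴴ + Q for all t ≥ 0, then P(t) → P∞ as t → ∞. -/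
open Matrix Filter

open NormedSpace Nat Topology

namespace LyapunovAux

section decay

attribute [local instance] Matrix.linftyOpNormedAddCommGroup Matrix.linftyOpNormedRing
  Matrix.linftyOpNormedAlgebra

variable {n : ℕ}

lemma scalar_tendsto {μ : ℂ} (hμ : μ.re < 0) (j : ℕ) :
    Tendsto (fun t : ℝ => Complex.exp ((t : ℂ) * μ) * ((t : ℂ) ^ j / (j ! : ℂ))) atTop (𝓝 0) := by
  set b : ℝ := -μ.re with hb
  have hb0 : 0 < b := by simpa [hb] using hμ
  have h1 : Tendsto (fun t : ℝ => (b * t) ^ j * Real.exp (-(b * t))) atTop (𝓝 0) :=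
    (Real.tendsto_pow_mul_exp_neg_atTop_nhds_zero j).comp (tendsto_atTop_atTop_of_monotone
      (fun x y hxy => by nlinarith) (fun c => ⟨c / b + 1, by rw [mul_add, mul_one, mul_div_cancel₀ _ hb0.ne']; linarith⟩))
  have h2 : Tendsto (fun t : ℝ => t ^ j * Real.exp (μ.re * t) / j !) atTop (𝓝 0) := by
    have := (h1.const_mul ((b ^ j)⁻¹ * (j ! : ℝ)⁻¹))
    rw [mul_zero] at this
    refine this.congr fun t => ?_
    have : -(b * t) = μ.re * t := by rw [hb]; ring
    rw [this]
    field_simp [mul_pow]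
    ring
  apply squeeze_zero_norm' ?_ h2
  filter_upwards [eventually_ge_atTop (0 : ℝ)] with t ht
  have : ‖Complex.exp ((t : ℂ) * μ) * ((t : ℂ) ^ j / (j ! : ℂ))‖
      = Real.exp (μ.re * t) * (t ^ j / j !) := by
    rw [norm_mul, Complex.norm_exp]
    simp [map_div₀, map_pow, Complex.norm_real, Complex.norm_natCast,
      abs_of_nonneg ht, mul_comm]
  rw [this]; ring_nf; exact le_refl _

lemma real_smul_eq (t : ℝ) (A : Matrix (Fin n) (Fin n) ℂ) : t • A = (t : ℂ) • A := by
  ext i j; simp [Matrix.smul_apply, Complex.real_smul]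

set_option maxHeartbeats 1600000 in
lemma sol_formula (A Q Pinf : Matrix (Fin n) (Fin n) ℂ)
    (hPinf : A * Pinf + Pinf * Aᴴ + Q = 0)
    (P : ℝ → Matrix (Fin n) (Fin n) ℂ)
    (hcont : Continuous P)
    (hode : ∀ t : ℝ, 0 ≤ t →
      Tendsto (slope P t) (𝓝[≠] t) (𝓝 (A * P t + P t * Aᴴ + Q))) :
    ∀ t : ℝ, 0 ≤ t →
      P t = exp (t • A) * (P 0 - Pinf) * exp (t • Aᴴ) + Pinf := by
  have hexpEq : (exp : Matrix (Fin n) (Fin n) ℂ → _) = exp := rfl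
  set E : ℝ → Matrix (Fin n) (Fin n) ℂ := fun t => P t - Pinf with hE
  have hQ : Q = -(A * Pinf + Pinf * Aᴴ) := by
    rw [eq_neg_iff_add_eq_zero, add_comm]; exact hPinf
  have hEderiv : ∀ t : ℝ, 0 ≤ t → HasDerivAt E (A * E t + E t * Aᴴ) t := by
    intro t ht
    have hP : HasDerivAt P (A * P t + P t * Aᴴ + Q) t :=
      hasDerivAt_iff_tendsto_slope.mpr (hode t ht)
    have := hP.sub_const Pinf
    refine this.congr_deriv (Eq.symm ?_)
    rw [hE, hQ]
    simp only [mul_sub, sub_mul]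
    noncomm_ring
  set e₁ : ℝ → Matrix (Fin n) (Fin n) ℂ := fun t => exp (-(t • A)) with he₁
  set e₂ : ℝ → Matrix (Fin n) (Fin n) ℂ := fun t => exp (-(t • Aᴴ)) with he₂
  have he₁deriv : ∀ t : ℝ, HasDerivAt e₁ (-(A * e₁ t)) t := by
    intro t
    have h := hasDerivAt_exp_smul_const' (𝕂 := ℝ) A (-t)
    have hneg : HasDerivAt (fun u : ℝ => -u) (-1 : ℝ) t := (hasDerivAt_id t).neg
    have := h.scomp t hneg
    simp [he₁, Function.comp_def, neg_smul] at this; exact this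
  have he₂deriv : ∀ t : ℝ, HasDerivAt e₂ (-(e₂ t * Aᴴ)) t := by
    intro t
    have h := hasDerivAt_exp_smul_const (𝕂 := ℝ) Aᴴ (-t)
    have hneg : HasDerivAt (fun u : ℝ => -u) (-1 : ℝ) t := (hasDerivAt_id t).neg
    have := h.scomp t hneg
    simp [he₂, Function.comp_def, neg_smul] at this; exact this
  set F : ℝ → Matrix (Fin n) (Fin n) ℂ := fun t => e₁ t * E t * e₂ t with hF
  have hFderiv : ∀ t : ℝ, 0 ≤ t → HasDerivAt F 0 t := by
    intro t ht
    have h := (((he₁deriv t).mul (hEderiv t ht)).mul (he₂deriv t))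
    refine h.congr_deriv (Eq.symm ?_)
    have hc : A * e₁ t = e₁ t * A := by
      exact (((Commute.refl A).smul_right t).neg_right).exp_right
    have hc2 : Aᴴ * e₂ t = e₂ t * Aᴴ := by
      exact (((Commute.refl Aᴴ).smul_right t).neg_right).exp_right
    rw [← hc2]
    simp only [mul_add, add_mul, mul_neg, neg_mul, Pi.mul_apply]
    rw [hc]
    noncomm_ring
  have hconst : ∀ T : ℝ, 0 ≤ T → F T = F 0 := by
    intro T hT
    have hcF : ContinuousOn F (Set.Icc 0 T) := by
      apply Continuous.continuousOn
      have hce : Continuous e₁ := by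
        apply exp_continuous.comp
        exact (continuous_id.smul continuous_const).neg
      have hce2 : Continuous e₂ := by
        apply exp_continuous.comp
        exact (continuous_id.smul continuous_const).neg
      exact (hce.mul (hcont.sub continuous_const)).mul hce2
    have := constant_of_has_deriv_right_zero hcF
      (fun x hx => ((hFderiv x hx.1).hasDerivWithinAt))
    exact this T (Set.mem_Icc.mpr ⟨hT, le_refl T⟩)
  intro t ht
  have hkey := hconst t ht
  have hF0 : F 0 = E 0 := by
    simp [hF, he₁, he₂, exp_zero]
  have h1 : exp (t • A) * e₁ t = 1 := by
    rw [he₁]; beta_reduce; erw [← exp_add_of_commute ((Commute.refl (t • A)).neg_right), add_neg_cancel, exp_zero]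
  have h2 : e₂ t * exp (t • Aᴴ) = 1 := by
    rw [he₂]; beta_reduce; erw [← exp_add_of_commute ((Commute.refl (t • Aᴴ)).neg_left), neg_add_cancel, exp_zero]
  have hEt : E t = exp (t • A) * E 0 * exp (t • Aᴴ) := by
    calc E t = (exp (t • A) * e₁ t) * E t * (e₂ t * exp (t • Aᴴ)) := by
          rw [h1, h2, one_mul, mul_one]
      _ = exp (t • A) * F t * exp (t • Aᴴ) := by rw [hF]; noncomm_ring
      _ = exp (t • A) * E 0 * exp (t • Aᴴ) := by rw [hkey, hF0]
  have : P t = E t + Pinf := by rw [hE]; simp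
  rw [this, hEt, hE]

lemma exp_smul_mulVec_tendsto (A : Matrix (Fin n) (Fin n) ℂ) (hA : A.IsHurwitz)
    (v : Fin n → ℂ) :
    Tendsto (fun t : ℝ => exp (t • A) *ᵥ v) atTop (𝓝 0) := by
  set S : Submodule ℂ (Fin n → ℂ) :=
    { carrier := {w | Tendsto (fun t : ℝ => exp (t • A) *ᵥ w) atTop (𝓝 0)}
      add_mem' := fun {a b} ha hb => by
        simpa [Matrix.mulVec_add] using ha.add hb
      zero_mem' := by simpa [Matrix.mulVec_zero] using (tendsto_const_nhds :
        Tendsto (fun _ : ℝ => (0 : Fin n → ℂ)) atTop _)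
      smul_mem' := fun c w hw => by
        simpa [Matrix.mulVec_smul] using hw.const_smul c } with hS
  suffices hle : ∀ μ : ℂ, Module.End.maxGenEigenspace (Matrix.toLinAlgEquiv' A) μ ≤ S by
    have htop := Module.End.iSup_maxGenEigenspace_eq_top (Matrix.toLinAlgEquiv' A)
    have : v ∈ (⊤ : Submodule ℂ (Fin n → ℂ)) := Submodule.mem_top
    rw [← htop] at this
    exact iSup_le hle this
  intro μ
  by_cases hbot : Module.End.maxGenEigenspace (Matrix.toLinAlgEquiv' A) μ = ⊥
  · rw [hbot]; exact bot_le
  -- μ has negative real part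
  have hμ : μ.re < 0 := by
    apply hA
    rw [← AlgEquiv.spectrum_eq (Matrix.toLinAlgEquiv' (R := ℂ) (n := Fin n)) A]
    rw [← Module.End.hasEigenvalue_iff_mem_spectrum]
    obtain ⟨k, hk⟩ : ∃ k : ℕ, Module.End.genEigenspace (Matrix.toLinAlgEquiv' A) μ k ≠ ⊥ := by
      by_contra h
      push_neg at h
      exact hbot (by simp [← Module.End.iSup_genEigenspace_eq, h])
    exact Module.End.hasEigenvalue_of_hasGenEigenvalue (k := k) hk
  intro w hw
  rw [Module.End.mem_maxGenEigenspace] at hw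
  obtain ⟨k, hk⟩ := hw
  set N : Matrix (Fin n) (Fin n) ℂ := A - μ • 1 with hN
  have hNk : ∀ j, k ≤ j → N ^ j *ᵥ w = 0 := by
    have hNk0 : N ^ k *ᵥ w = 0 := by
      have hmap : Matrix.toLinAlgEquiv' (N ^ k)
          = (Matrix.toLinAlgEquiv' A - μ • 1) ^ k := by
        rw [map_pow, map_sub, _root_.map_smul, _root_.map_one]
      calc N ^ k *ᵥ w = Matrix.toLinAlgEquiv' (N ^ k) w := by
            rw [Matrix.toLinAlgEquiv'_apply]
        _ = 0 := by rw [hmap]; exact hk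
    intro j hj
    rw [← Nat.sub_add_cancel hj, pow_add, ← Matrix.mulVec_mulVec, hNk0, Matrix.mulVec_zero]
  -- key formula
  have key : ∀ t : ℝ, exp (t • A) *ᵥ w
      = ∑ j ∈ Finset.range k, (Complex.exp ((t : ℂ) * μ) * ((t : ℂ) ^ j / (j ! : ℂ)))
          • (N ^ j *ᵥ w) := by
    intro t
    have hsplit : t • A = ((t : ℂ) * μ) • (1 : Matrix (Fin n) (Fin n) ℂ) + (t : ℂ) • N := by
      rw [real_smul_eq, hN]; module
    have hcomm : Commute (((t : ℂ) * μ) • (1 : Matrix (Fin n) (Fin n) ℂ)) ((t : ℂ) • N) :=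
      ((Commute.one_left _).smul_left _).smul_right _
    rw [hsplit, Matrix.exp_add_of_commute _ _ hcomm]
    have hexp1 : exp (((t : ℂ) * μ) • (1 : Matrix (Fin n) (Fin n) ℂ))
        = Complex.exp ((t : ℂ) * μ) • (1 : Matrix (Fin n) (Fin n) ℂ) := by
      rw [← Algebra.algebraMap_eq_smul_one]; erw [← algebraMap_exp_comm]; rw [
        Complex.exp_eq_exp_ℂ, Algebra.algebraMap_eq_smul_one]
    rw [hexp1, Matrix.smul_mul, one_mul, Matrix.smul_mulVec]
    -- now compute exp ((t:ℂ) • N) *ᵥ w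
    have hmv : exp ((t : ℂ) • N) *ᵥ w
        = ∑ j ∈ Finset.range k, (((t : ℂ) ^ j / (j ! : ℂ))) • (N ^ j *ᵥ w) := by
      let L : Matrix (Fin n) (Fin n) ℂ →ₗ[ℂ] (Fin n → ℂ) :=
        { toFun := fun M => M *ᵥ w
          map_add' := fun M₁ M₂ => Matrix.add_mulVec M₁ M₂ w
          map_smul' := fun c M => Matrix.smul_mulVec c M w }
      let Lc := LinearMap.toContinuousLinearMap L
      have hsum : Summable fun j : ℕ => ((j ! : ℂ))⁻¹ • ((t : ℂ) • N) ^ j :=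
        expSeries_summable' _
      have : exp ((t : ℂ) • N) *ᵥ w
          = ∑' j : ℕ, Lc (((j ! : ℂ))⁻¹ • ((t : ℂ) • N) ^ j) := by
        rw [exp_eq_tsum ℂ]
        exact (Lc.map_tsum hsum)
      rw [this]
      rw [tsum_eq_sum (s := Finset.range k) ?_]
      · apply Finset.sum_congr rfl
        intro j hj
        show (((j ! : ℂ))⁻¹ • ((t : ℂ) • N) ^ j) *ᵥ w = _
        rw [smul_pow, smul_smul, Matrix.smul_mulVec]
        congr 1
        field_simp
      · intro j hj
        rw [Finset.mem_range, not_lt] at hj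
        show (((j ! : ℂ))⁻¹ • ((t : ℂ) • N) ^ j) *ᵥ w = 0
        rw [smul_pow, smul_smul, Matrix.smul_mulVec, hNk j hj, smul_zero]
    rw [hmv, Finset.smul_sum]
    apply Finset.sum_congr rfl
    intro j _
    rw [smul_smul]
  -- conclude
  show Tendsto _ atTop (𝓝 0)
  have : Tendsto (fun t : ℝ => ∑ j ∈ Finset.range k,
      (Complex.exp ((t : ℂ) * μ) * ((t : ℂ) ^ j / (j ! : ℂ))) • (N ^ j *ᵥ w)) atTop (𝓝 0) := by
    have := tendsto_finset_sum (Finset.range k) (fun j _ =>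
      (scalar_tendsto hμ j).smul_const (N ^ j *ᵥ w))
    simpa using this
  exact this.congr fun t => (key t).symm


lemma exp_smul_tendsto (A : Matrix (Fin n) (Fin n) ℂ) (hA : A.IsHurwitz) :
    Tendsto (fun t : ℝ => exp (t • A)) atTop (𝓝 0) := by
  apply tendsto_pi_nhds.2
  intro i
  apply tendsto_pi_nhds.2
  intro j
  have h := exp_smul_mulVec_tendsto A hA (Pi.single j 1)
  have h2 : Tendsto (fun t : ℝ => (exp (t • A) *ᵥ Pi.single j 1) i) atTop (𝓝 0) := by
    have := (continuous_apply i).tendsto (0 : Fin n → ℂ)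
    exact this.comp h
  refine h2.congr fun t => ?_
  rw [Matrix.mulVec_single]
  simp

end decay


end LyapunovAux

open LyapunovAux

attribute [local instance] Matrix.normedAddCommGroup Matrix.normedSpace

set_option maxHeartbeats 1600000

/-- **Convergence of the covariance to the steady state.**
If `A` is Hurwitz, `Pinf` solves the algebraic Lyapunov equation `A P + P Aᴴ + Q = 0`,
and the differentiable function `P` satisfies `P′(t) = A P(t) + P(t) Aᴴ + Q` for all
`t ≥ 0`, then `P(t) → Pinf` as `t → ∞`. -/
theorem lyapunov_ode_tendsto_steady_state {n : ℕ}
    (A Q Pinf : Matrix (Fin n) (Fin n) ℂ)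
    (hA : A.IsHurwitz)
    (hPinf : A * Pinf + Pinf * Aᴴ + Q = 0)
    (P : ℝ → Matrix (Fin n) (Fin n) ℂ)
    (hdiff : Differentiable ℝ P)
    (hode : ∀ t : ℝ, 0 ≤ t → deriv P t = A * P t + P t * Aᴴ + Q) :
    Tendsto P atTop (nhds Pinf) := by
  have hslope : ∀ t : ℝ, 0 ≤ t →
      Tendsto (slope P t) (𝓝[≠] t) (𝓝 (A * P t + P t * Aᴴ + Q)) := by
    intro t ht
    have h : HasDerivAt P (A * P t + P t * Aᴴ + Q) t := by
      have := (hdiff t).hasDerivAt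
      exact (hode t ht) ▸ this
    exact hasDerivAt_iff_tendsto_slope.mp h
  have hsol := sol_formula A Q Pinf hPinf P hdiff.continuous hslope
  have h1 : Tendsto (fun t : ℝ => exp (t • A)) atTop (𝓝 0) := exp_smul_tendsto A hA
  have h2 : Tendsto (fun t : ℝ => exp (t • Aᴴ)) atTop (𝓝 0) := by
    have hc : Continuous (fun M : Matrix (Fin n) (Fin n) ℂ => Mᴴ) :=
      continuous_id.matrix_conjTranspose
    have h3 : Tendsto (fun t : ℝ => (exp (t • A))ᴴ) atTop (𝓝 0) := by
      have := (hc.tendsto 0).comp h1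
      simpa [Function.comp_def] using this
    refine h3.congr fun t => ?_
    rw [← Matrix.exp_conjTranspose]
    congr 1
    rw [Matrix.conjTranspose_smul, star_trivial]
  have hmul : Tendsto (fun t : ℝ => exp (t • A) * (P 0 - Pinf) * exp (t • Aᴴ) + Pinf)
      atTop (𝓝 ((0 : Matrix (Fin n) (Fin n) ℂ) * (P 0 - Pinf) * 0 + Pinf)) :=
    ((h1.mul tendsto_const_nhds).mul h2).add tendsto_const_nhds
  simp only [zero_mul, mul_zero, zero_add] at hmul
  exact Tendsto.congr'
    (by filter_upwards [eventually_ge_atTop (0:ℝ)] with t ht using (hsol t ht).symm) hmul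
end
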